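/- Consider an OCO with unbounded memory instance (𝒳, ℋ, A, B) with H_1 = Σ_{k=0}^∞ k‖A^k‖ < ∞. Let f_1, …, f_T : ℋ → ℝ be L-Lipschitz continuous, suppose each f̄_t is convex and L̄-Lipschitz continuous, let R : 𝒳 → ℝ be α-strongly convex, let η > 0, and suppose for each t the decision x_t ∈ 𝒳 minimizes x ↦ Σ_{s=1}^{t-1} f̄_s(x) + R(x)/η over 𝒳 (FTRL iterates). Let h_t be the resulting histories. Then for every t ∈ {1, …, T}, |f_t(h_t) − f̄_t(x_t)| ≤ η L L̄ H_1 / α. -/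

import Mathlib

set_option maxHeartbeats 1000000
open Finset

lemma min_gap {W : Type*} [NormedAddCommGroup W] [NormedSpace ℝ W]
    {X : Set W} (hXconvex : Convex ℝ X) {σ : ℝ} (hσ : 0 < σ) {F : W → ℝ}
    (hF : ∀ x ∈ X, ∀ y ∈ X, ∀ a b : ℝ, 0 ≤ a → 0 ≤ b → a + b = 1 →
      F (a • x + b • y) ≤ a * F x + b * F y - a * b * (σ / 2) * ‖x - y‖ ^ 2)
    {xs : W} (hxs : xs ∈ X) (hmin : ∀ z ∈ X, F xs ≤ F z)
    {y : W} (hy : y ∈ X) :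
    F xs + σ / 2 * ‖y - xs‖ ^ 2 ≤ F y := by
  set d2 := ‖y - xs‖ ^ 2 with hd2
  have hd2nn : 0 ≤ d2 := by positivity
  rcases eq_or_lt_of_le hd2nn with hd0 | hdpos
  · have := hmin y hy; nlinarith
  have key : ∀ b : ℝ, 0 < b → b ≤ 1 → (1 - b) * (σ / 2) * d2 ≤ F y - F xs := by
    intro b hb hb1
    have ha : (0:ℝ) ≤ 1 - b := by linarith
    have hmem : (1 - b) • xs + b • y ∈ X := hXconvex hxs hy ha hb.le (by ring)
    have h1 := hF xs hxs y hy (1 - b) b ha hb.le (by ring)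
    have h2 := hmin _ hmem
    rw [show ‖xs - y‖ = ‖y - xs‖ from norm_sub_rev _ _, ← hd2] at h1
    nlinarith
  have hmain : σ / 2 * d2 ≤ F y - F xs := by
    refine le_of_forall_pos_le_add fun ε hε => ?_
    set b := min 1 (ε / (σ / 2 * d2)) with hb
    have hbpos : 0 < b := lt_min one_pos (by positivity)
    have hb1 : b ≤ 1 := min_le_left _ _
    have hk := key b hbpos hb1
    have : b * (σ / 2 * d2) ≤ ε := by
      calc b * (σ / 2 * d2) ≤ ε / (σ / 2 * d2) * (σ / 2 * d2) := by
            apply mul_le_mul_of_nonneg_right (min_le_right _ _); positivity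
        _ = ε := by field_simp
    nlinarith
  linarith



/-- For an OCO with unbounded memory instance with `H₁ = ∑ₖ k‖Aᵏ‖ < ∞`,
`L`-Lipschitz losses `f_t` whose unary forms `f̄_t` are convex and `L̄`-Lipschitz on `𝒳`, and FTRL
iterates `x_t` with step size `η > 0` and `α`-strongly convex regularizer `R`, the actual and
idealized losses satisfy `|f_t(h_t) − f̄_t(x_t)| ≤ η L L̄ H₁ / α` for every `t ∈ {1, …, T}`. -/
theorem stmt_5
    {W : Type*} [NormedAddCommGroup W] [InnerProductSpace ℝ W] [CompleteSpace W]
    {H : Type*} [NormedAddCommGroup H] [NormedSpace ℝ H] [CompleteSpace H]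
    (X : Set W) (hXne : X.Nonempty) (hXclosed : IsClosed X) (hXconvex : Convex ℝ X)
    (A : H →L[ℝ] H) (B : W →L[ℝ] H) (hB : ‖B‖ ≤ 1)
    (hH1 : Summable fun k : ℕ => (k : ℝ) * ‖A ^ k‖)
    (T : ℕ) (f : ℕ → H → ℝ) (L Lbar : ℝ) (hL : 0 ≤ L) (hLbar : 0 ≤ Lbar)
    (hf : ∀ t, 1 ≤ t → t ≤ T → ∀ a b : H, |f t a - f t b| ≤ L * ‖a - b‖)
    (hconv : ∀ t, 1 ≤ t → t ≤ T →
      ConvexOn ℝ X (fun x : W => f t (∑ k ∈ Finset.range t, (A ^ k) (B x))))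
    (hlipbar : ∀ t, 1 ≤ t → t ≤ T → ∀ a ∈ X, ∀ b ∈ X,
      |f t (∑ k ∈ Finset.range t, (A ^ k) (B a)) - f t (∑ k ∈ Finset.range t, (A ^ k) (B b))|
        ≤ Lbar * ‖a - b‖)
    (R : W → ℝ) (α : ℝ) (hα : 0 < α) (hR : StrongConvexOn X α R)
    (η : ℝ) (hη : 0 < η)
    (x : ℕ → W)
    (hx : ∀ t, 1 ≤ t → t ≤ T → x t ∈ X ∧
      ∀ y ∈ X,
        (∑ s ∈ Finset.Icc 1 (t - 1), f s (∑ k ∈ Finset.range s, (A ^ k) (B (x t))))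
            + R (x t) / η
          ≤ (∑ s ∈ Finset.Icc 1 (t - 1), f s (∑ k ∈ Finset.range s, (A ^ k) (B y)))
            + R y / η)
    (h : ℕ → H) (hh0 : h 0 = 0) (hh : ∀ t : ℕ, h (t + 1) = A (h t) + B (x (t + 1))) :
    ∀ t, 1 ≤ t → t ≤ T →
      |f t (h t) - f t (∑ k ∈ Finset.range t, (A ^ k) (B (x t)))|
        ≤ η * L * Lbar * (∑' k : ℕ, (k : ℝ) * ‖A ^ k‖) / α := by
  
  set g : ℕ → W → ℝ := fun s y => f s (∑ k ∈ Finset.range s, (A ^ k) (B y)) with hg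
  set Φ : ℕ → W → ℝ := fun t y => (∑ s ∈ Finset.Icc 1 (t - 1), g s y) + R y / η with hΦ
  set σ : ℝ := α / η with hσdef
  have hσ : 0 < σ := by positivity
  set c : ℝ := η * Lbar / α with hc
  have hcnn : 0 ≤ c := by positivity
  -- strong convexity of Φ t
  have hΦsc : ∀ t, t ≤ T → ∀ u ∈ X, ∀ v ∈ X, ∀ a b : ℝ, 0 ≤ a → 0 ≤ b → a + b = 1 →
      Φ t (a • u + b • v) ≤ a * Φ t u + b * Φ t v - a * b * (σ / 2) * ‖u - v‖ ^ 2 := by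
    intro t ht u hu v hv a b ha hb hab
    have hsum : (∑ s ∈ Finset.Icc 1 (t - 1), g s (a • u + b • v))
        ≤ a * (∑ s ∈ Finset.Icc 1 (t - 1), g s u) + b * (∑ s ∈ Finset.Icc 1 (t - 1), g s v) := by
      rw [Finset.mul_sum, Finset.mul_sum, ← Finset.sum_add_distrib]
      refine Finset.sum_le_sum fun s hs => ?_
      rw [Finset.mem_Icc] at hs
      have hsT : s ≤ T := le_trans hs.2 (le_trans (Nat.sub_le t 1) ht)
      exact (hconv s hs.1 hsT).2 hu hv ha hb hab
    have hRc := hR.2 hu hv ha hb hab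
    simp only [smul_eq_mul] at hRc
    have hRd : R (a • u + b • v) / η ≤ a * (R u / η) + b * (R v / η)
        - a * b * (σ / 2) * ‖u - v‖ ^ 2 := by
      rw [hσdef]
      calc R (a • u + b • v) / η ≤ (a * R u + b * R v - a * b * (α / 2 * ‖u - v‖ ^ 2)) / η := by
            gcongr
        _ = a * (R u / η) + b * (R v / η) - a * b * (α / η / 2) * ‖u - v‖ ^ 2 := by
            field_simp
    simp only [hΦ]
    nlinarith [hsum, hRd]
  -- stability
  have stab : ∀ t, 1 ≤ t → t + 1 ≤ T → ‖x (t + 1) - x t‖ ≤ c := by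
    intro t ht ht1
    obtain ⟨hxt, hmint⟩ := hx t ht (le_trans (Nat.le_succ t) ht1)
    obtain ⟨hxt1, hmint1⟩ := hx (t + 1) (by omega) ht1
    have hgap1 : Φ t (x t) + σ / 2 * ‖x (t+1) - x t‖ ^ 2 ≤ Φ t (x (t+1)) :=
      min_gap hXconvex hσ (hΦsc t (by omega)) hxt hmint hxt1
    have hgap2 : Φ (t+1) (x (t+1)) + σ / 2 * ‖x t - x (t+1)‖ ^ 2 ≤ Φ (t+1) (x t) :=
      min_gap hXconvex hσ (hΦsc (t+1) ht1) hxt1 hmint1 hxt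
    have hsplit : ∀ y : W, Φ (t+1) y = Φ t y + g t y := by
      intro y
      simp only [hΦ, Nat.add_sub_cancel]
      rw [show Finset.Icc 1 t = Finset.Icc 1 ((t-1)+1) by rw [Nat.sub_add_cancel ht],
        Finset.sum_Icc_succ_top (by omega), Nat.sub_add_cancel ht]
      ring
    rw [hsplit, hsplit] at hgap2
    have hgl := hlipbar t ht (by omega) (x t) hxt (x (t+1)) hxt1
    have hgl' : g t (x t) - g t (x (t+1)) ≤ Lbar * ‖x t - x (t+1)‖ :=
      le_trans (le_abs_self _) hgl
    rw [show ‖x t - x (t+1)‖ = ‖x (t+1) - x t‖ from norm_sub_rev _ _] at hgap2 hgl'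
    set d := ‖x (t+1) - x t‖ with hd
    have hdnn : 0 ≤ d := norm_nonneg _
    have hkey : σ * d ^ 2 ≤ Lbar * d := by nlinarith [hgap1, hgap2, hgl']
    rcases eq_or_lt_of_le hdnn with h0 | hpos
    · rw [← h0]; exact hcnn
    · have hcσ : c * σ = Lbar := by
        rw [hc, hσdef]; field_simp
      nlinarith [mul_pos hσ hpos]
  -- chain of stability
  have chain : ∀ n t, 1 ≤ t → t + n ≤ T → ‖x t - x (t + n)‖ ≤ n * c := by
    intro n
    induction n with
    | zero => intro t _ _; simp
    | succ n ih =>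
        intro t ht htn
        have h1 := ih t ht (by omega)
        have h2 := stab (t + n) (by omega) (by omega)
        calc ‖x t - x (t + (n+1))‖
            = ‖(x t - x (t + n)) + (x (t + n) - x (t + n + 1))‖ := by
              rw [sub_add_sub_cancel]
              rfl
          _ ≤ ‖x t - x (t + n)‖ + ‖x (t + n) - x (t + n + 1)‖ := norm_add_le _ _
          _ ≤ n * c + c := by
              refine add_le_add h1 ?_
              rw [norm_sub_rev]; exact h2
          _ = (n + 1 : ℕ) * c := by push_cast; ring
  -- closed form for h
  have hform : ∀ t, h t = ∑ k ∈ Finset.range t, (A ^ k) (B (x (t - k))) := by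
    intro t
    induction t with
    | zero => simp [hh0]
    | succ t ih =>
        rw [hh t, ih, Finset.sum_range_succ']
        rw [map_sum]
        congr 1
        refine Finset.sum_congr rfl fun k hk => ?_
        have hidx : t + 1 - (k + 1) = t - k := by omega
        rw [hidx, pow_succ']
        rfl
  -- main bound
  intro t ht htT
  have hBle : ∀ v : W, ‖B v‖ ≤ ‖v‖ := fun v =>
    (B.le_opNorm v).trans (by nlinarith [norm_nonneg v])
  have hdist : ‖h t - ∑ k ∈ Finset.range t, (A ^ k) (B (x t))‖
      ≤ (∑ k ∈ Finset.range t, (k : ℝ) * ‖A ^ k‖) * c := by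
    rw [hform t, ← Finset.sum_sub_distrib]
    calc ‖∑ k ∈ Finset.range t, ((A ^ k) (B (x (t - k))) - (A ^ k) (B (x t)))‖
        ≤ ∑ k ∈ Finset.range t, ‖(A ^ k) (B (x (t - k))) - (A ^ k) (B (x t))‖ :=
          norm_sum_le _ _
      _ ≤ ∑ k ∈ Finset.range t, (k : ℝ) * ‖A ^ k‖ * c := by
          refine Finset.sum_le_sum fun k hk => ?_
          rw [Finset.mem_range] at hk
          have hsub : 1 ≤ t - k := by omega
          have hch : ‖x (t - k) - x t‖ ≤ k * c := by
            have := chain k (t - k) hsub (by omega)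
            rwa [show t - k + k = t by omega] at this
          calc ‖(A ^ k) (B (x (t - k))) - (A ^ k) (B (x t))‖
              = ‖(A ^ k) (B (x (t - k) - x t))‖ := by rw [map_sub, map_sub]
            _ ≤ ‖A ^ k‖ * ‖B (x (t - k) - x t)‖ := (A ^ k).le_opNorm _
            _ ≤ ‖A ^ k‖ * ‖x (t - k) - x t‖ := by
                exact mul_le_mul_of_nonneg_left (hBle _) (norm_nonneg _)
            _ ≤ ‖A ^ k‖ * (k * c) := mul_le_mul_of_nonneg_left hch (norm_nonneg _)
            _ = (k : ℝ) * ‖A ^ k‖ * c := by ring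
      _ = (∑ k ∈ Finset.range t, (k : ℝ) * ‖A ^ k‖) * c := by rw [Finset.sum_mul]
  have hsum_le : (∑ k ∈ Finset.range t, (k : ℝ) * ‖A ^ k‖) ≤ ∑' k : ℕ, (k : ℝ) * ‖A ^ k‖ :=
    Summable.sum_le_tsum _ (fun k _ => by positivity) hH1
  calc |f t (h t) - f t (∑ k ∈ Finset.range t, (A ^ k) (B (x t)))|
      ≤ L * ‖h t - ∑ k ∈ Finset.range t, (A ^ k) (B (x t))‖ := hf t ht htT _ _
    _ ≤ L * ((∑ k ∈ Finset.range t, (k : ℝ) * ‖A ^ k‖) * c) :=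
        mul_le_mul_of_nonneg_left hdist hL
    _ ≤ L * ((∑' k : ℕ, (k : ℝ) * ‖A ^ k‖) * c) := by
        refine mul_le_mul_of_nonneg_left (mul_le_mul_of_nonneg_right hsum_le hcnn) hL
    _ = η * L * Lbar * (∑' k : ℕ, (k : ℝ) * ‖A ^ k‖) / α := by
        rw [hc]; field_simp
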